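/- arXiv:2408.10378 — 6 statements merged into one kernel-verified Lean document; each statement's English description precedes it below -/
import Mathlib

section
/- There exists a constant M₁ > 0 such that for all μ > 0 and all x ∈ [0,1], ( (1/(2μ))(sinh(2μx) − sinh(2μ(x−1))) )^{1/2} / (2 cosh(μ)) ≤ M₁. -/
lemma sinh_le_mul_cosh {x : ℝ} (hx : 0 ≤ x) : Real.sinh x ≤ x * Real.cosh x := by
  have key : ∀ y : ℝ, HasDerivAt (fun t => t * Real.cosh t - Real.sinh t)
      (y * Real.sinh y) y := by
    intro y
    have h1 : HasDerivAt (fun t : ℝ => t * Real.cosh t)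
        (1 * Real.cosh y + y * Real.sinh y) y :=
      (hasDerivAt_id y).mul (Real.hasDerivAt_cosh y)
    have h2 := h1.sub (Real.hasDerivAt_sinh y)
    exact h2.congr_deriv (by ring)
  have mono : MonotoneOn (fun t => t * Real.cosh t - Real.sinh t) (Set.Ici (0:ℝ)) := by
    apply monotoneOn_of_deriv_nonneg (convex_Ici 0)
    · exact (Continuous.sub (continuous_id.mul Real.continuous_cosh)
        Real.continuous_sinh).continuousOn
    · intro y _
      exact (key y).differentiableAt.differentiableWithinAt
    · intro y hy
      rw [(key y).deriv]
      have hy0 : (0:ℝ) ≤ y := le_of_lt (by simpa using hy)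
      exact mul_nonneg hy0 (Real.sinh_nonneg_iff.mpr hy0)
  have := mono (Set.self_mem_Ici) (Set.mem_Ici.mpr hx) hx
  simp only [Real.sinh_zero, Real.cosh_zero, mul_one, zero_mul, sub_zero, zero_sub, neg_zero] at this
  linarith

theorem uniform_bound_M1 :
    ∃ M₁ : ℝ, 0 < M₁ ∧ ∀ μ : ℝ, 0 < μ → ∀ x ∈ Set.Icc (0 : ℝ) 1,
      Real.sqrt ((1 / (2 * μ)) * (Real.sinh (2 * μ * x) - Real.sinh (2 * μ * (x - 1)))) /
        (2 * Real.cosh μ) ≤ M₁ := by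
  refine ⟨1, one_pos, fun μ hμ x hx => ?_⟩
  obtain ⟨hx0, hx1⟩ := hx
  have hd : Real.sinh (2 * μ * x) - Real.sinh (2 * μ * (x - 1))
      = 2 * Real.cosh (μ * (2 * x - 1)) * Real.sinh μ := by
    have e1 : 2 * μ * x = μ * (2 * x - 1) + μ := by ring
    have e2 : 2 * μ * (x - 1) = μ * (2 * x - 1) - μ := by ring
    rw [e1, e2, Real.sinh_add, Real.sinh_sub]; ring
  have hcosh_le : Real.cosh (μ * (2 * x - 1)) ≤ Real.cosh μ := by
    rw [Real.cosh_le_cosh]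
    rw [abs_mul, abs_of_pos hμ]
    have : |2 * x - 1| ≤ 1 := by rw [abs_le]; constructor <;> linarith
    nlinarith [abs_nonneg (2*x-1)]
  have hsl : Real.sinh μ ≤ μ * Real.cosh μ := sinh_le_mul_cosh hμ.le
  have hcoshpos : 0 < Real.cosh μ := Real.cosh_pos μ
  have hinner : (1 / (2 * μ)) * (Real.sinh (2 * μ * x) - Real.sinh (2 * μ * (x - 1)))
      ≤ Real.cosh μ * Real.cosh μ := by
    rw [hd]
    rw [div_mul_eq_mul_div, one_mul, div_le_iff₀ (by linarith)]
    have hc0 : 0 < Real.cosh (μ * (2 * x - 1)) := Real.cosh_pos _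
    have hS : 0 ≤ Real.sinh μ := Real.sinh_nonneg_iff.mpr hμ.le
    nlinarith [mul_nonneg (sub_nonneg.mpr hcosh_le) hS,
      mul_nonneg hcoshpos.le (sub_nonneg.mpr hsl)]
  have hsq : Real.sqrt ((1 / (2 * μ)) * (Real.sinh (2 * μ * x) - Real.sinh (2 * μ * (x - 1))))
      ≤ Real.cosh μ := by
    calc Real.sqrt _ ≤ Real.sqrt (Real.cosh μ * Real.cosh μ) := Real.sqrt_le_sqrt hinner
      _ = Real.cosh μ := by rw [Real.sqrt_mul_self hcoshpos.le]
  rw [div_le_one (by linarith)]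
  linarith
end

section
/- Let v : [0,1] → ℝ be a W^{1,p} function with v(0) = 0, and let p, q ∈ (1, ∞) and δ ∈ (0,1) satisfy δ(1/q + 1 − 1/p) = 1/q. Then ‖v‖_{L^∞(0,1)} ≤ δ^{−δ} ‖v'‖_{L^p(0,1)}^δ ‖v‖_{L^q(0,1)}^{1−δ}. -/
open Set MeasureTheory

theorem interpolation_Linfty (v v' : ℝ → ℝ) (p q δ : ℝ)
    (hp : 1 < p) (hq : 1 < q) (hδ : δ ∈ Set.Ioo (0 : ℝ) 1)
    (hpq : δ * (1 / q + 1 - 1 / p) = 1 / q)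
    (hderiv : ∀ y ∈ Set.Icc (0 : ℝ) 1, HasDerivAt v (v' y) y)
    (hv'int : IntervalIntegrable (fun y => |v' y| ^ p) volume 0 1)
    (hv0 : v 0 = 0) :
    ∀ y ∈ Set.Icc (0 : ℝ) 1,
      |v y| ≤ δ ^ (-δ) * ((∫ y in (0:ℝ)..1, |v' y| ^ p) ^ (1 / p)) ^ δ *
        ((∫ y in (0:ℝ)..1, |v y| ^ q) ^ (1 / q)) ^ (1 - δ) := by
  obtain ⟨hδ0, hδ1⟩ := hδ
  have hp0 : (0:ℝ) < p := lt_trans zero_lt_one hp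
  have hq0 : (0:ℝ) < q := lt_trans zero_lt_one hq
  set s : ℝ := δ⁻¹ with hs_def
  have hs1 : 1 < s := one_lt_inv_iff₀.2 ⟨hδ0, hδ1⟩
  have hs0 : (0:ℝ) < s := lt_trans zero_lt_one hs1
  have hsm1 : (0:ℝ) < s - 1 := sub_pos.2 hs1
  have hconj : p.HolderConjugate (p/(p-1)) := Real.HolderConjugate.conjExponent hp
  set p' : ℝ := p/(p-1) with hp'_def
  have hp'0 : (0:ℝ) < p' := hconj.symm.pos
  have hpm1 : p - 1 ≠ 0 := sub_ne_zero.2 (ne_of_gt hp)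
  have hkey : (s - 1) * p' = q := by
    rw [hs_def, hp'_def]
    field_simp at hpq ⊢
    nlinarith [hpq]
  have hkey2 : δ / p' = (1 - δ) / q := by
    rw [div_eq_div_iff hp'0.ne' hq0.ne', ← hkey, hs_def]
    field_simp
  -- continuity and boundedness of v
  have hcont : ContinuousOn v (Set.Icc 0 1) := fun t ht =>
    (hderiv t ht).continuousAt.continuousWithinAt
  obtain ⟨C, hC⟩ := isCompact_Icc.exists_bound_of_continuousOn hcont
  set D : ℝ := max C 1 with hD_def
  have hD1 : (1:ℝ) ≤ D := le_max_right _ _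
  have hD0 : (0:ℝ) < D := lt_of_lt_of_le one_pos hD1
  have hvD : ∀ t ∈ Set.Icc (0:ℝ) 1, |v t| ≤ D := fun t ht =>
    le_trans (by simpa [Real.norm_eq_abs] using hC t ht) (le_max_left _ _)
  set μ : Measure ℝ := volume.restrict (Set.Ioc (0:ℝ) 1) with hμ_def
  haveI : IsFiniteMeasure μ := by constructor; rw [hμ_def]; simp
  -- measurability
  have hvmeas : AEStronglyMeasurable v μ :=
    (hcont.mono Set.Ioc_subset_Icc_self).aestronglyMeasurable measurableSet_Ioc
  have hrestr_eq : μ = volume.restrict (Set.Ioo (0:ℝ) 1) := by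
    rw [hμ_def, Measure.restrict_congr_set Ioo_ae_eq_Ioc]
  have hv'eq : v' =ᵐ[μ] deriv v := by
    rw [hrestr_eq]
    filter_upwards [ae_restrict_mem measurableSet_Ioo] with t ht
    exact ((hderiv t (Set.Ioo_subset_Icc_self ht)).deriv).symm
  have hv'meas : AEStronglyMeasurable v' μ :=
    (measurable_deriv v).aestronglyMeasurable.congr hv'eq.symm
  -- integrability of |v'|^p and v'
  have hv'pInt : Integrable (fun t => |v' t| ^ p) μ :=
    (intervalIntegrable_iff_integrableOn_Ioc_of_le (by norm_num)).1 hv'int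
  have hv'Int : Integrable v' μ := by
    have hb : Integrable (fun t => 1 + |v' t| ^ p) μ := by
      simpa using (integrable_const (1:ℝ)).add hv'pInt
    refine hb.mono' hv'meas (Filter.Eventually.of_forall fun t => ?_)
    rw [Real.norm_eq_abs]
    rcases le_or_gt (|v' t|) 1 with h | h
    · have : (0:ℝ) ≤ |v' t| ^ p := Real.rpow_nonneg (abs_nonneg _) _
      linarith
    · have h4 : |v' t| ^ (1:ℝ) ≤ |v' t| ^ p :=
        Real.rpow_le_rpow_of_exponent_le h.le hp.le
      rw [Real.rpow_one] at h4
      linarith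
  -- the derivative of |v|^s
  set g : ℝ → ℝ := fun t => s * |v t| ^ (s - 2) * v t * v' t with hg_def
  have hgderiv : ∀ t ∈ Set.Icc (0:ℝ) 1, HasDerivAt (fun u => |v u| ^ s) (g t) t := by
    intro t ht
    have := (hasDerivAt_abs_rpow (v t) hs1).comp t (hderiv t ht)
    simpa [hg_def, mul_assoc, mul_comm, mul_left_comm, Function.comp_def] using this
  have habs : ∀ t : ℝ, |g t| = s * |v t| ^ (s - 1) * |v' t| := by
    intro t
    rcases eq_or_ne (v t) 0 with h | h
    · simp [hg_def, h, Real.zero_rpow (by linarith : s - 1 ≠ 0)]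
    · have h1 : |v t| ^ (s - 2) * |v t| = |v t| ^ (s - 1) := by
        rw [← Real.rpow_add_one (abs_ne_zero.2 h) (s - 2)]
        congr 1
        ring
      calc |g t| = s * |v t| ^ (s - 2) * |v t| * |v' t| := by
              rw [hg_def]
              simp [abs_mul, abs_of_nonneg hs0.le,
                abs_of_nonneg (Real.rpow_nonneg (abs_nonneg _) _)]
        _ = s * (|v t| ^ (s - 2) * |v t|) * |v' t| := by ring
        _ = s * |v t| ^ (s - 1) * |v' t| := by rw [h1]
  -- integrability of g
  have hgmeas : AEStronglyMeasurable g μ := by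
    have h1 : AEMeasurable v μ := hvmeas.aemeasurable
    exact (((aemeasurable_const.mul
      ((measurable_abs.comp_aemeasurable h1).pow aemeasurable_const)).mul h1).mul
      hv'meas.aemeasurable).aestronglyMeasurable
  have hgInt : Integrable g μ := by
    have hbound : Integrable (fun t => s * D ^ (s - 1) * |v' t|) μ := by
      simpa [mul_assoc] using (hv'Int.abs.const_mul (s * D ^ (s - 1)))
    refine hbound.mono' hgmeas ?_
    rw [hμ_def]
    filter_upwards [ae_restrict_mem measurableSet_Ioc] with t ht
    have ht' : t ∈ Set.Icc (0:ℝ) 1 := ⟨ht.1.le, ht.2⟩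
    rw [Real.norm_eq_abs, habs t]
    have h2 : |v t| ^ (s - 1) ≤ D ^ (s - 1) :=
      Real.rpow_le_rpow (abs_nonneg _) (hvD t ht') (by linarith)
    have h3 := mul_le_mul_of_nonneg_right (mul_le_mul_of_nonneg_left h2 hs0.le)
      (abs_nonneg (v' t))
    exact h3
  -- Memℒp facts for Hölder
  have hfmeas : AEStronglyMeasurable (fun t => |v t| ^ (s - 1)) μ :=
    ((measurable_abs.comp_aemeasurable hvmeas.aemeasurable).pow
      aemeasurable_const).aestronglyMeasurable
  have hmemf : MemLp (fun t => |v t| ^ (s - 1)) (ENNReal.ofReal p') μ := by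
    refine MemLp.of_bound hfmeas (D ^ (s - 1)) ?_
    rw [hμ_def]
    filter_upwards [ae_restrict_mem measurableSet_Ioc] with t ht
    rw [Real.norm_eq_abs, abs_of_nonneg (Real.rpow_nonneg (abs_nonneg _) _)]
    exact Real.rpow_le_rpow (abs_nonneg _) (hvD t ⟨ht.1.le, ht.2⟩) (by linarith)
  have hmem' : MemLp v' (ENNReal.ofReal p) μ := by
    rw [← memLp_norm_rpow_iff (q := ENNReal.ofReal p) hv'meas (by simp [hp0])
      ENNReal.ofReal_ne_top]
    rw [ENNReal.toReal_ofReal hp0.le, ENNReal.div_self (by simp [hp0]) ENNReal.ofReal_ne_top,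
      memLp_one_iff_integrable]
    simpa [Real.norm_eq_abs] using hv'pInt
  have hmemg : MemLp (fun t => |v' t|) (ENNReal.ofReal p) μ := by
    simpa [Real.norm_eq_abs] using hmem'.norm
  set IA := ∫ t, |v' t| ^ p ∂μ with hIA_def
  set IB := ∫ t, |v t| ^ q ∂μ with hIB_def
  have hIA0 : 0 ≤ IA := integral_nonneg fun t => Real.rpow_nonneg (abs_nonneg _) _
  have hIB0 : 0 ≤ IB := integral_nonneg fun t => Real.rpow_nonneg (abs_nonneg _) _
  have h6 : ∀ t : ℝ, (|v t| ^ (s - 1)) ^ p' = |v t| ^ q := fun t => by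
    rw [← Real.rpow_mul (abs_nonneg _), hkey]
  have hHolder : ∫ t, |v t| ^ (s - 1) * |v' t| ∂μ ≤ IB ^ (1 / p') * IA ^ (1 / p) := by
    have h := integral_mul_le_Lp_mul_Lq_of_nonneg hconj.symm (μ := μ)
      (f := fun t => |v t| ^ (s - 1)) (g := fun t => |v' t|)
      (Filter.Eventually.of_forall fun t => Real.rpow_nonneg (abs_nonneg _) _)
      (Filter.Eventually.of_forall fun t => abs_nonneg _) hmemf hmemg
    simp only [h6] at h
    simpa [hIA_def, hIB_def] using h
  have h5 : ∫ t, |g t| ∂μ = s * ∫ t, |v t| ^ (s - 1) * |v' t| ∂μ := by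
    simp_rw [habs, mul_assoc]
    exact integral_const_mul _ _
  -- pointwise bound
  intro y hy
  have hgIy : IntervalIntegrable g volume 0 y := by
    rw [intervalIntegrable_iff_integrableOn_Ioc_of_le hy.1]
    have hgOn : IntegrableOn g (Set.Ioc 0 1) volume := hgInt
    exact hgOn.mono_set (Set.Ioc_subset_Ioc le_rfl hy.2)
  have hFTC : ∫ t in (0:ℝ)..y, g t = |v y| ^ s := by
    have hFT := intervalIntegral.integral_eq_sub_of_hasDerivAt (f := fun u => |v u| ^ s)
      (fun t ht => hgderiv t (by
        rw [Set.uIcc_of_le hy.1] at ht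
        exact ⟨ht.1, le_trans ht.2 hy.2⟩)) hgIy
    simpa [hv0, Real.zero_rpow hs0.ne'] using hFT
  have hmono1 : ∫ t in (0:ℝ)..y, g t ≤ ∫ t in (0:ℝ)..y, |g t| :=
    intervalIntegral.integral_mono_on hy.1 hgIy hgIy.abs fun t _ => le_abs_self _
  have hgIy1 : IntervalIntegrable (fun t => |g t|) volume 0 1 := by
    rw [intervalIntegrable_iff_integrableOn_Ioc_of_le (by norm_num)]
    exact hgInt.abs
  have hmono2 : ∫ t in (0:ℝ)..y, |g t| ≤ ∫ t in (0:ℝ)..1, |g t| :=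
    intervalIntegral.integral_mono_interval le_rfl hy.1 hy.2
      (Filter.Eventually.of_forall fun t => abs_nonneg _) hgIy1
  have hchain : |v y| ^ s ≤ s * (IB ^ (1 / p') * IA ^ (1 / p)) := by
    rw [← hFTC]
    calc ∫ t in (0:ℝ)..y, g t ≤ ∫ t in (0:ℝ)..y, |g t| := hmono1
      _ ≤ ∫ t in (0:ℝ)..1, |g t| := hmono2
      _ = ∫ t, |g t| ∂μ := by rw [intervalIntegral.integral_of_le zero_le_one]
      _ = s * ∫ t, |v t| ^ (s - 1) * |v' t| ∂μ := h5
      _ ≤ s * (IB ^ (1 / p') * IA ^ (1 / p)) := mul_le_mul_of_nonneg_left hHolder hs0.le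
  -- rewrite goal integrals
  rw [intervalIntegral.integral_of_le zero_le_one, intervalIntegral.integral_of_le zero_le_one,
    ← hIA_def, ← hIB_def]
  have h7 : (|v y| ^ s) ^ δ = |v y| := by
    rw [← Real.rpow_mul (abs_nonneg _), hs_def, inv_mul_cancel₀ hδ0.ne', Real.rpow_one]
  have h8 : (|v y| ^ s) ^ δ ≤ (s * (IB ^ (1 / p') * IA ^ (1 / p))) ^ δ :=
    Real.rpow_le_rpow (Real.rpow_nonneg (abs_nonneg _) _) hchain hδ0.le
  rw [h7] at h8
  refine le_trans h8 (le_of_eq ?_)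
  rw [Real.mul_rpow hs0.le (mul_nonneg (Real.rpow_nonneg hIB0 _) (Real.rpow_nonneg hIA0 _)),
    Real.mul_rpow (Real.rpow_nonneg hIB0 _) (Real.rpow_nonneg hIA0 _)]
  have e1 : s ^ δ = δ ^ (-δ) := by
    rw [hs_def, Real.rpow_neg hδ0.le, ← Real.inv_rpow hδ0.le]
  have e2 : (IB ^ (1 / p')) ^ δ = (IB ^ (1 / q)) ^ (1 - δ) := by
    rw [← Real.rpow_mul hIB0, ← Real.rpow_mul hIB0]
    congr 1
    rw [div_eq_div_iff hp'0.ne' hq0.ne'] at hkey2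
    field_simp
    linarith [hkey2]
  rw [e1, e2]
  ring
end

section
/- Let v : [0,1] → ℝ be a W^{1,p} function with v(0) = 0, let p, q ∈ (1, ∞) and δ ∈ (0,1) satisfy δ(1/q + 1 − 1/p) = 1/q, and set α = 1/δ. Then for every y ∈ (0,1), |v(y)|^α ≤ α · ‖v‖_{L^q(0,1)}^{α−1} · ‖v'‖_{L^p(0,1)}. -/
open Set MeasureTheory

lemma hasDerivAt_abs_rpow_mul {α : ℝ} (hα : 1 < α) (x : ℝ) :
    HasDerivAt (fun t : ℝ => |t| ^ (α - 1) * t) (α * |x| ^ (α - 1)) x := by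
  have hα1 : (0:ℝ) < α - 1 := by linarith
  rcases lt_trichotomy x 0 with hx | hx | hx
  · have h1 : HasDerivAt (fun t : ℝ => -((-t) ^ α)) (α * (-x) ^ (α - 1)) x := by
      have h2 : HasDerivAt (fun t : ℝ => (-t) ^ α) (α * (-x) ^ (α - 1) * (-1)) x := by
        have h3 := Real.hasDerivAt_rpow_const (x := -x) (p := α) (Or.inl (by linarith))
        exact h3.comp x (hasDerivAt_neg x)
      have : HasDerivAt (fun t : ℝ => -((-t) ^ α)) (-(α * (-x) ^ (α - 1) * (-1))) x := h2.neg
      convert this using 1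
      ring
    have heq : (fun t : ℝ => |t| ^ (α - 1) * t) =ᶠ[nhds x] fun t : ℝ => -((-t) ^ α) := by
      filter_upwards [Iio_mem_nhds hx] with t ht
      have ht' : (0:ℝ) < -t := by simpa using ht
      have h4 : (-t) ^ α = (-t) ^ (α - 1) * (-t) := by
        rw [← Real.rpow_add_one ht'.ne', sub_add_cancel]
      rw [abs_of_neg ht, h4]
      ring
    have := h1.congr_of_eventuallyEq heq
    rwa [abs_of_neg hx]
  · subst hx
    have : HasDerivAt (fun t : ℝ => |t| ^ (α - 1) * t) 0 0 := by
      rw [hasDerivAt_iff_tendsto_slope]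
      have hcont : Filter.Tendsto (fun t : ℝ => |t| ^ (α - 1)) (nhds 0) (nhds 0) := by
        have : Filter.Tendsto (fun t : ℝ => |t|) (nhds 0) (nhds 0) := by
          simpa using continuous_abs.tendsto (0:ℝ)
        have h2 : Filter.Tendsto (fun s : ℝ => s ^ (α - 1)) (nhds 0) (nhds 0) := by
          have := (Real.continuousAt_rpow_const 0 (α - 1) (Or.inr hα1.le))
          simpa [Real.zero_rpow hα1.ne'] using this.tendsto
        exact h2.comp this
      have heq : ∀ t : ℝ, t ≠ 0 → slope (fun t : ℝ => |t| ^ (α - 1) * t) 0 t = |t| ^ (α - 1) := by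
        intro t ht
        simp [slope_def_field, ht, div_eq_iff ht]
      refine Filter.Tendsto.congr' ?_ (hcont.mono_left nhdsWithin_le_nhds)
      filter_upwards [self_mem_nhdsWithin] with t ht
      exact (heq t ht).symm
    simpa [Real.zero_rpow hα1.ne'] using this
  · have h1 : HasDerivAt (fun t : ℝ => t ^ α) (α * x ^ (α - 1)) x :=
      Real.hasDerivAt_rpow_const (Or.inl hx.ne')
    have heq : (fun t : ℝ => |t| ^ (α - 1) * t) =ᶠ[nhds x] fun t : ℝ => t ^ α := by
      filter_upwards [Ioi_mem_nhds hx] with t ht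
      have ht' : (0:ℝ) < t := ht
      rw [abs_of_pos ht', ← Real.rpow_add_one ht'.ne', sub_add_cancel]
    have := h1.congr_of_eventuallyEq heq
    rwa [abs_of_pos hx]

theorem pointwise_power_bound (v v' : ℝ → ℝ) (p q δ α : ℝ)
    (hp : 1 < p) (hq : 1 < q) (hδ : δ ∈ Set.Ioo (0 : ℝ) 1)
    (hpq : δ * (1 / q + 1 - 1 / p) = 1 / q) (hα : α = 1 / δ)
    (hderiv : ∀ y ∈ Set.Icc (0 : ℝ) 1, HasDerivAt v (v' y) y)
    (hv'int : IntervalIntegrable (fun y => |v' y| ^ p) volume 0 1)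
    (hv0 : v 0 = 0) :
    ∀ y ∈ Set.Ioo (0 : ℝ) 1,
      |v y| ^ α ≤ α * ((∫ y in (0:ℝ)..1, |v y| ^ q) ^ (1 / q)) ^ (α - 1) *
        (∫ y in (0:ℝ)..1, |v' y| ^ p) ^ (1 / p) := by
  obtain ⟨hδ0, hδ1⟩ := hδ
  have hq0 : (0:ℝ) < q := lt_trans one_pos hq
  have hp0 : (0:ℝ) < p := lt_trans one_pos hp
  have hα1 : 1 < α := by rw [hα]; exact (one_lt_div hδ0).mpr hδ1
  have hα0 : (0:ℝ) < α := lt_trans one_pos hα1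
  have hαm1 : (0:ℝ) < α - 1 := by linarith
  -- exponent arithmetic
  have hδα : δ = 1 / α := by rw [hα]; field_simp
  have h1 : 1 / q + 1 - 1 / p = α * (1 / q) := by
    rw [hδα] at hpq
    field_simp at hpq ⊢
    linarith
  have hkey : (α - 1) / q = 1 - 1 / p := by
    have h2 : (α - 1) / q = α * (1 / q) - 1 / q := by ring
    rw [h2, ← h1]; ring
  set p' : ℝ := p / (p - 1) with hp'def
  have hconj : p'.HolderConjugate p := (Real.HolderConjugate.conjExponent hp).symm
  have hp'0 : 0 < p' := hconj.pos
  have hp1 : p - 1 ≠ 0 := sub_ne_zero.mpr (ne_of_gt hp)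
  have hk2 : (α - 1) * p = (p - 1) * q := by
    have h3 : (α - 1) = (1 - 1 / p) * q := by
      rw [← hkey]; field_simp
    rw [h3]; field_simp
  have hp'q : (α - 1) * p' = q := by
    rw [hp'def]
    field_simp
    linarith [hk2]
  have hinvp' : 1 / p' = (α - 1) / q := by
    rw [hp'def, one_div_div, hkey]
    field_simp
  -- continuity and measurability facts
  have hvC : ContinuousOn v (Icc 0 1) := fun t ht => (hderiv t ht).continuousAt.continuousWithinAt
  have habsC : ContinuousOn (fun t => |v t| ^ (α - 1)) (Icc (0:ℝ) 1) :=
    (hvC.abs).rpow_const (fun x _ => Or.inr hαm1.le)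
  have hv'meas : ∀ s : Set ℝ, s ⊆ Icc (0:ℝ) 1 → MeasurableSet s →
      AEStronglyMeasurable v' (volume.restrict s) := by
    intro s hs hms
    refine (measurable_deriv v).aestronglyMeasurable.restrict.congr ?_
    rw [Filter.EventuallyEq, ae_restrict_iff' hms]
    exact Filter.Eventually.of_forall fun t ht => (hderiv t (hs ht)).deriv
  -- v' is interval integrable on [0,1]
  have hbound : ∀ t : ℝ, ‖v' t‖ ≤ 1 + |v' t| ^ p := by
    intro t
    rw [Real.norm_eq_abs]
    rcases le_or_gt (|v' t|) 1 with h | h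
    · have : (0:ℝ) ≤ |v' t| ^ p := Real.rpow_nonneg (abs_nonneg _) _
      linarith
    · have h2 : |v' t| = |v' t| ^ (1:ℝ) := (Real.rpow_one _).symm
      have h3 : |v' t| ^ (1:ℝ) ≤ |v' t| ^ p :=
        Real.rpow_le_rpow_of_exponent_le h.le hp.le
      rw [Real.rpow_one] at h3
      linarith
  have hv'II : IntervalIntegrable v' volume 0 1 := by
    constructor
    · refine Integrable.mono' ((integrable_const (1:ℝ)).add hv'int.1) ?_
        (Filter.Eventually.of_forall hbound)
      exact hv'meas _ Ioc_subset_Icc_self measurableSet_Ioc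
    · simp [Ioc_eq_empty, not_lt.mpr (zero_le_one : (0:ℝ) ≤ 1)]
  intro y hy
  obtain ⟨hy0, hy1⟩ := hy
  have hyIcc : Icc (0:ℝ) y ⊆ Icc 0 1 := Icc_subset_Icc le_rfl hy1.le
  have huIcc : uIcc (0:ℝ) y = Icc 0 y := uIcc_of_le hy0.le
  -- FTC
  have hG : ∀ t ∈ uIcc (0:ℝ) y,
      HasDerivAt (fun s => |v s| ^ (α - 1) * v s) (α * |v t| ^ (α - 1) * v' t) t := by
    intro t ht
    rw [huIcc] at ht
    have := (hasDerivAt_abs_rpow_mul hα1 (v t)).comp t (hderiv t (hyIcc ht))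
    simpa [mul_assoc, Function.comp_def] using this
  have hGint : IntervalIntegrable (fun t => α * |v t| ^ (α - 1) * v' t) volume 0 y := by
    have hsub : uIcc (0:ℝ) y ⊆ uIcc 0 1 := by
      rw [huIcc, uIcc_of_le (zero_le_one : (0:ℝ) ≤ 1)]; exact hyIcc
    refine IntervalIntegrable.continuousOn_mul (hv'II.mono_set hsub) ?_
    rw [huIcc]
    exact continuousOn_const.mul (habsC.mono hyIcc)
  have hFTC : ∫ t in (0:ℝ)..y, α * |v t| ^ (α - 1) * v' t
      = |v y| ^ (α - 1) * v y - |v 0| ^ (α - 1) * v 0 :=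
    intervalIntegral.integral_eq_sub_of_hasDerivAt hG hGint
  have hstep1 : |v y| ^ α = |∫ t in (0:ℝ)..y, α * |v t| ^ (α - 1) * v' t| := by
    rw [hFTC, hv0]
    simp only [mul_zero, sub_zero, abs_mul, abs_abs]
    rw [abs_of_nonneg (Real.rpow_nonneg (abs_nonneg _) _)]
    rcases eq_or_ne (v y) 0 with h | h
    · simp [h, Real.zero_rpow (by positivity : α ≠ 0), Real.zero_rpow hαm1.ne']
    · rw [← Real.rpow_add_one (abs_ne_zero.mpr h), sub_add_cancel]
  have hstep2 : |∫ t in (0:ℝ)..y, α * |v t| ^ (α - 1) * v' t|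
      ≤ α * ∫ t in (0:ℝ)..y, |v t| ^ (α - 1) * |v' t| := by
    refine le_trans (intervalIntegral.abs_integral_le_integral_abs hy0.le) ?_
    rw [← intervalIntegral.integral_const_mul]
    apply le_of_eq
    congr 1
    funext t
    rw [abs_mul, abs_mul, abs_of_nonneg hα0.le,
      abs_of_nonneg (Real.rpow_nonneg (abs_nonneg _) _), mul_assoc]
  -- Hölder
  haveI : IsFiniteMeasure (volume.restrict (Ioc (0:ℝ) y)) :=
    ⟨by rw [Measure.restrict_apply_univ]; exact measure_Ioc_lt_top⟩
  obtain ⟨M, hM⟩ := isCompact_Icc.exists_bound_of_continuousOn hvC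
  have hIocsub : Ioc (0:ℝ) y ⊆ Icc 0 1 := fun t ht => ⟨ht.1.le, le_trans ht.2 hy1.le⟩
  have hfAESM : AEStronglyMeasurable (fun t => |v t| ^ (α - 1)) (volume.restrict (Ioc 0 y)) :=
    ContinuousOn.aestronglyMeasurable ((habsC.mono hIocsub)) measurableSet_Ioc
  have hmemf : MemLp (fun t => |v t| ^ (α - 1)) (ENNReal.ofReal p')
      (volume.restrict (Ioc (0:ℝ) y)) := by
    refine MemLp.mono_exponent (q := ⊤) ?_ le_top
    refine memLp_top_of_bound hfAESM (|M| ^ (α - 1)) ?_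
    rw [ae_restrict_iff' measurableSet_Ioc]
    refine Filter.Eventually.of_forall fun t ht => ?_
    rw [Real.norm_eq_abs, abs_of_nonneg (Real.rpow_nonneg (abs_nonneg _) _)]
    refine Real.rpow_le_rpow (abs_nonneg _) ?_ hαm1.le
    exact le_trans (by simpa [Real.norm_eq_abs] using hM t (hIocsub ht)) (le_abs_self M)
  have hgAESM : AEStronglyMeasurable (fun t => |v' t|) (volume.restrict (Ioc (0:ℝ) y)) :=
    by simpa [Real.norm_eq_abs] using (hv'meas _ hIocsub measurableSet_Ioc).norm
  have hv'pint : IntegrableOn (fun t => |v' t| ^ p) (Ioc (0:ℝ) y) volume :=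
    hv'int.1.mono_set (Ioc_subset_Ioc le_rfl hy1.le)
  have hmemg : MemLp (fun t => |v' t|) (ENNReal.ofReal p)
      (volume.restrict (Ioc (0:ℝ) y)) := by
    have A : ENNReal.ofReal p ≠ 0 := by
      rw [Ne, ENNReal.ofReal_eq_zero, not_le]; exact hp0
    have B : ENNReal.ofReal p ≠ ⊤ := ENNReal.ofReal_ne_top
    rw [← memLp_norm_rpow_iff hgAESM A B, ENNReal.toReal_ofReal hp0.le,
      ENNReal.div_self A B, memLp_one_iff_integrable]
    simp only [Real.norm_eq_abs, abs_abs]; exact hv'pint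
  have hHolder : ∫ t in (0:ℝ)..y, |v t| ^ (α - 1) * |v' t|
      ≤ (∫ t in (0:ℝ)..y, |v t| ^ q) ^ (1 / p') * (∫ t in (0:ℝ)..y, |v' t| ^ p) ^ (1 / p) := by
    rw [intervalIntegral.integral_of_le hy0.le, intervalIntegral.integral_of_le hy0.le,
      intervalIntegral.integral_of_le hy0.le]
    have := MeasureTheory.integral_mul_le_Lp_mul_Lq_of_nonneg hconj
      (Filter.Eventually.of_forall fun t => Real.rpow_nonneg (abs_nonneg _) _)
      (Filter.Eventually.of_forall fun t => abs_nonneg _) hmemf hmemg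
    refine le_trans this (le_of_eq ?_)
    congr 1
    · congr 1
      refine integral_congr_ae (Filter.Eventually.of_forall fun t => ?_)
      show (|v t| ^ (α - 1)) ^ p' = |v t| ^ q
      rw [← Real.rpow_mul (abs_nonneg _), hp'q]
  -- extend the integrals to [0,1]
  have hvqC : ContinuousOn (fun t => |v t| ^ q) (Icc (0:ℝ) 1) :=
    (hvC.abs).rpow_const (fun x _ => Or.inr hq0.le)
  have hvqint : IntegrableOn (fun t => |v t| ^ q) (Ioc (0:ℝ) 1) volume :=
    (hvqC.integrableOn_Icc).mono_set Ioc_subset_Icc_self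
  have e1 : (∫ t in (0:ℝ)..y, |v t| ^ q) ≤ ∫ t in (0:ℝ)..1, |v t| ^ q := by
    rw [intervalIntegral.integral_of_le hy0.le, intervalIntegral.integral_of_le zero_le_one]
    refine setIntegral_mono_set hvqint ?_ (HasSubset.Subset.eventuallyLE (Ioc_subset_Ioc le_rfl hy1.le))
    exact Filter.Eventually.of_forall fun t => Real.rpow_nonneg (abs_nonneg _) _
  have e2 : (∫ t in (0:ℝ)..y, |v' t| ^ p) ≤ ∫ t in (0:ℝ)..1, |v' t| ^ p := by
    rw [intervalIntegral.integral_of_le hy0.le, intervalIntegral.integral_of_le zero_le_one]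
    refine setIntegral_mono_set hv'int.1 ?_ (HasSubset.Subset.eventuallyLE (Ioc_subset_Ioc le_rfl hy1.le))
    exact Filter.Eventually.of_forall fun t => Real.rpow_nonneg (abs_nonneg _) _
  have hA0 : 0 ≤ ∫ t in (0:ℝ)..y, |v t| ^ q :=
    intervalIntegral.integral_nonneg hy0.le fun t _ => Real.rpow_nonneg (abs_nonneg _) _
  have hB0 : 0 ≤ ∫ t in (0:ℝ)..y, |v' t| ^ p :=
    intervalIntegral.integral_nonneg hy0.le fun t _ => Real.rpow_nonneg (abs_nonneg _) _
  have hI10 : 0 ≤ ∫ t in (0:ℝ)..1, |v t| ^ q :=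
    intervalIntegral.integral_nonneg zero_le_one fun t _ => Real.rpow_nonneg (abs_nonneg _) _
  have hI20 : 0 ≤ ∫ t in (0:ℝ)..1, |v' t| ^ p :=
    intervalIntegral.integral_nonneg zero_le_one fun t _ => Real.rpow_nonneg (abs_nonneg _) _
  have r1 : (∫ t in (0:ℝ)..y, |v t| ^ q) ^ (1 / p') ≤ (∫ t in (0:ℝ)..1, |v t| ^ q) ^ (1 / p') :=
    Real.rpow_le_rpow hA0 e1 (by positivity)
  have r2 : (∫ t in (0:ℝ)..y, |v' t| ^ p) ^ (1 / p) ≤ (∫ t in (0:ℝ)..1, |v' t| ^ p) ^ (1 / p) :=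
    Real.rpow_le_rpow hB0 e2 (by positivity)
  have hrw : (∫ t in (0:ℝ)..1, |v t| ^ q) ^ (1 / p')
      = ((∫ t in (0:ℝ)..1, |v t| ^ q) ^ (1 / q)) ^ (α - 1) := by
    rw [show (1:ℝ) / p' = (1 / q) * (α - 1) by rw [hinvp']; ring, Real.rpow_mul hI10]
  calc |v y| ^ α = |∫ t in (0:ℝ)..y, α * |v t| ^ (α - 1) * v' t| := hstep1
    _ ≤ α * ∫ t in (0:ℝ)..y, |v t| ^ (α - 1) * |v' t| := hstep2
    _ ≤ α * ((∫ t in (0:ℝ)..y, |v t| ^ q) ^ (1 / p')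
          * (∫ t in (0:ℝ)..y, |v' t| ^ p) ^ (1 / p)) :=
        mul_le_mul_of_nonneg_left hHolder hα0.le
    _ ≤ α * ((∫ t in (0:ℝ)..1, |v t| ^ q) ^ (1 / p')
          * (∫ t in (0:ℝ)..1, |v' t| ^ p) ^ (1 / p)) := by
        refine mul_le_mul_of_nonneg_left ?_ hα0.le
        exact mul_le_mul r1 r2 (Real.rpow_nonneg hB0 _) (Real.rpow_nonneg hI10 _)
    _ = α * ((∫ t in (0:ℝ)..1, |v t| ^ q) ^ (1 / q)) ^ (α - 1) *
          (∫ t in (0:ℝ)..1, |v' t| ^ p) ^ (1 / p) := by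
        rw [hrw, mul_assoc]
end

section
/- Let v : [0,1] → ℝ be a W^{1,2} function with v(0) = 0 and let r ∈ (0,1). Then for every ε > 0, ‖v‖_{L^2(0,1)}^{(3+r)/2} ≤ ((3+r)ε/2)·‖v'‖_{L^2(0,1)}² + ((3+r)/(8ε))·‖v‖_{L^{1+r}(0,1)}^{1+r}. -/
open Set MeasureTheory

lemma abs_rpow_hasDerivAt {p : ℝ} (hp : 1 < p) (t : ℝ) :
    HasDerivAt (fun s : ℝ => |s| ^ p) (p * |t| ^ (p - 2) * t) t := by
  rcases lt_trichotomy t 0 with ht | ht | ht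
  · have h1 : HasDerivAt (fun s : ℝ => (-s) ^ p) (p * (-t) ^ (p - 1) * (-1)) t := by
      have := (Real.hasDerivAt_rpow_const (x := -t) (p := p) (Or.inl (by linarith))).comp t
        (hasDerivAt_neg t)
      simpa [Function.comp_def] using this
    have h2 : HasDerivAt (fun s : ℝ => |s| ^ p) (p * (-t) ^ (p - 1) * (-1)) t := by
      apply h1.congr_of_eventuallyEq
      filter_upwards [eventually_lt_nhds ht] with s hs
      rw [abs_of_neg hs]
    convert h2 using 1
    rw [abs_of_neg ht]
    have e : (-t) ^ (p - 1) = (-t) ^ (p - 2) * (-t) := by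
      have h := Real.rpow_add (by linarith : (0:ℝ) < -t) (p-2) 1
      rw [Real.rpow_one] at h
      rw [show p - 1 = p - 2 + 1 by ring, h]
    rw [e]; ring
  · subst ht
    have h0 : (fun s : ℝ => |s| ^ p) 0 = 0 := by
      simp [Real.zero_rpow (by positivity : p ≠ 0)]
    rw [hasDerivAt_iff_isLittleO]
    simp only [h0, abs_zero, Real.zero_rpow (by positivity : p ≠ 0), sub_zero, smul_zero,
      mul_zero, zero_mul]
    rw [Asymptotics.isLittleO_iff]
    intro c hc
    have hev : ∀ᶠ s : ℝ in nhds (0:ℝ), |s| < c ^ (1 / (p - 1)) := by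
      have hpos : (0:ℝ) < c ^ (1 / (p - 1)) := Real.rpow_pos_of_pos hc _
      simpa using eventually_abs_sub_lt (0:ℝ) hpos
    filter_upwards [hev] with s hs
    have h1 : |s| ^ p = |s| ^ (p - 1) * |s| := by
      have h := Real.rpow_add' (abs_nonneg s) (show p - 1 + 1 ≠ 0 by simpa using by positivity : (p-1)+1 ≠ 0)
      rw [Real.rpow_one] at h
      rw [show p = p - 1 + 1 by ring, h]
      ring_nf
    have h2 : |s| ^ (p - 1) ≤ c := by
      calc |s| ^ (p - 1) ≤ (c ^ (1 / (p - 1))) ^ (p - 1) :=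
            Real.rpow_le_rpow (abs_nonneg s) hs.le (by linarith)
        _ = c := by
            rw [← Real.rpow_mul hc.le, one_div,
              inv_mul_cancel₀ (by linarith : p - 1 ≠ 0), Real.rpow_one]
    calc ‖|s| ^ p‖ = |s| ^ (p-1) * |s| := by
          rw [Real.norm_eq_abs, abs_of_nonneg (Real.rpow_nonneg (abs_nonneg s) p), h1]
      _ ≤ c * ‖s‖ := by
          rw [Real.norm_eq_abs]
          exact mul_le_mul_of_nonneg_right h2 (abs_nonneg s)
  · have h1 : HasDerivAt (fun s : ℝ => |s| ^ p) (p * t ^ (p - 1)) t := by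
      apply (Real.hasDerivAt_rpow_const (x := t) (p := p) (Or.inl ht.ne')).congr_of_eventuallyEq
      filter_upwards [eventually_gt_nhds ht] with s hs
      rw [abs_of_pos hs]
    convert h1 using 1
    rw [abs_of_pos ht]
    have h := Real.rpow_add ht (p-2) 1
    rw [Real.rpow_one] at h
    rw [show p - 1 = p - 2 + 1 by ring, h]
    ring

theorem interpolation_with_eps (v v' : ℝ → ℝ) (r : ℝ) (hr : r ∈ Set.Ioo (0 : ℝ) 1)
    (hderiv : ∀ y ∈ Set.Icc (0 : ℝ) 1, HasDerivAt v (v' y) y)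
    (hv'int : IntervalIntegrable (fun y => (v' y) ^ 2) volume 0 1)
    (hv0 : v 0 = 0) :
    ∀ ε : ℝ, 0 < ε →
      (Real.sqrt (∫ y in (0:ℝ)..1, (v y) ^ 2)) ^ ((3 + r) / 2) ≤
        ((3 + r) * ε / 2) * (∫ y in (0:ℝ)..1, (v' y) ^ 2) +
          ((3 + r) / (8 * ε)) * (∫ y in (0:ℝ)..1, |v y| ^ (1 + r)) := by
  obtain ⟨hr0, hr1⟩ := hr
  intro ε hε
  set p : ℝ := (3 + r) / 2 with hpdef
  have hp1 : 1 < p := by rw [hpdef]; linarith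
  have hp0 : 0 < p := by linarith
  have hp2 : p - 2 ≠ 0 := by rw [hpdef]; intro h; nlinarith [h]
  have hvc : ContinuousOn v (Icc 0 1) :=
    fun y hy => ((hderiv y hy).continuousAt).continuousWithinAt
  obtain ⟨y₀, hy₀, hmax⟩ := isCompact_Icc.exists_isMaxOn (Set.nonempty_Icc.2 zero_le_one)
    (continuous_abs.comp_continuousOn hvc)
  have hy0le : (0:ℝ) ≤ y₀ := hy₀.1
  have hy1 : y₀ ≤ 1 := hy₀.2
  set M : ℝ := |v y₀| with hMdef
  -- integrability of v^2 and |v|^(1+r) on [0,1]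
  have hIv2 : IntervalIntegrable (fun y => v y ^ 2) volume 0 1 := by
    apply ContinuousOn.intervalIntegrable
    rw [uIcc_of_le zero_le_one]
    exact hvc.pow 2
  have hIvr : IntervalIntegrable (fun y => |v y| ^ (1 + r)) volume 0 1 := by
    apply ContinuousOn.intervalIntegrable
    rw [uIcc_of_le zero_le_one]
    exact (hvc.abs).rpow_const (fun x _ => Or.inr (by linarith))
  -- sqrt(∫ v^2) ≤ M
  have hsqrt : Real.sqrt (∫ y in (0:ℝ)..1, v y ^ 2) ≤ M := by
    have h1 : (∫ y in (0:ℝ)..1, v y ^ 2) ≤ M ^ 2 := by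
      have h2 := intervalIntegral.integral_mono_on (μ := volume) (f := fun y => v y ^ 2)
        (g := fun _ => M ^ 2) zero_le_one hIv2 intervalIntegrable_const (fun y hy => by
          calc v y ^ 2 = |v y| ^ 2 := (sq_abs _).symm
            _ ≤ M ^ 2 := pow_le_pow_left₀ (abs_nonneg _) (hmax hy) 2)
      simpa using h2
    calc Real.sqrt (∫ y in (0:ℝ)..1, v y ^ 2) ≤ Real.sqrt (M ^ 2) := Real.sqrt_le_sqrt h1
      _ = M := Real.sqrt_sq (abs_nonneg _)
  have hLHS : (Real.sqrt (∫ y in (0:ℝ)..1, v y ^ 2)) ^ p ≤ M ^ p :=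
    Real.rpow_le_rpow (Real.sqrt_nonneg _) hsqrt hp0.le
  -- the derivative of |v|^p
  set F' : ℝ → ℝ := fun t => p * |v t| ^ (p - 2) * v t * v' t with hF'def
  set g : ℝ → ℝ := fun t => ((3 + r) * ε / 2) * v' t ^ 2 + ((3 + r) / (8 * ε)) * |v t| ^ (1 + r)
    with hgdef
  have hIg : IntervalIntegrable g volume 0 1 :=
    (hv'int.const_mul _).add (hIvr.const_mul _)
  -- pointwise: |F' t| = p * |v t| ^ (p-1) * |v' t|
  have habs : ∀ t, |F' t| = p * |v t| ^ (p - 1) * |v' t| := by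
    intro t
    rcases eq_or_ne (v t) 0 with h | h
    · simp [hF'def, h, Real.zero_rpow (show p - 1 ≠ 0 by intro h2; nlinarith [h2])]
    · have hvpos : 0 < |v t| := abs_pos.2 h
      have e : |v t| ^ (p - 2) * |v t| = |v t| ^ (p - 1) := by
        have h2 := Real.rpow_add hvpos (p - 2) 1
        rw [Real.rpow_one] at h2
        rw [show p - 1 = p - 2 + 1 by ring, h2]
      calc |F' t| = p * (|v t| ^ (p - 2) * |v t|) * |v' t| := by
            simp only [hF'def, abs_mul, abs_of_pos hp0,
              abs_of_nonneg (Real.rpow_nonneg (abs_nonneg (v t)) (p - 2)), abs_abs]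
            ring
        _ = p * |v t| ^ (p - 1) * |v' t| := by rw [e]
  -- pointwise bound |F' t| ≤ g t
  have hFg : ∀ t, |F' t| ≤ g t := by
    intro t
    rw [habs t]
    have h2 : |v t| ^ (p - 1) * |v t| ^ (p - 1) = |v t| ^ (1 + r) := by
      rw [← Real.rpow_add' (abs_nonneg (v t)) (show p - 1 + (p - 1) ≠ 0 by
        rw [hpdef]; intro hh; nlinarith [hh])]
      congr 1
      rw [hpdef]; ring
    have key : |v t| ^ (p - 1) * |v' t| ≤ ε * v' t ^ 2 + |v t| ^ (1 + r) / (4 * ε) := by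
      rw [← sub_nonneg]
      have expand : ε * v' t ^ 2 + |v t| ^ (1 + r) / (4 * ε) - |v t| ^ (p - 1) * |v' t|
          = (2 * ε * |v' t| - |v t| ^ (p - 1)) ^ 2 / (4 * ε) := by
        rw [← h2]
        field_simp
        linear_combination (-4 * ε ^ 2) * sq_abs (v' t)
      rw [expand]
      positivity
    calc p * |v t| ^ (p - 1) * |v' t| = p * (|v t| ^ (p - 1) * |v' t|) := by ring
      _ ≤ p * (ε * v' t ^ 2 + |v t| ^ (1 + r) / (4 * ε)) :=
          mul_le_mul_of_nonneg_left key hp0.le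
      _ = g t := by rw [hgdef, hpdef]; field_simp; ring
  -- measurability of v' on (0,1]
  have hv'm : AEStronglyMeasurable v' (volume.restrict (Ioc (0:ℝ) 1)) := by
    refine ((measurable_deriv v).aestronglyMeasurable).congr ?_
    filter_upwards [ae_restrict_mem measurableSet_Ioc] with y hy
    exact (hderiv y ⟨hy.1.le, hy.2⟩).deriv
  -- integrability of F' on [0, y₀]
  have hF'int : IntervalIntegrable F' volume 0 y₀ := by
    rw [intervalIntegrable_iff_integrableOn_Ioc_of_le hy0le]
    have hgi : IntegrableOn g (Ioc 0 y₀) volume :=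
      ((intervalIntegrable_iff_integrableOn_Ioc_of_le zero_le_one).1 hIg).mono_set
        (Ioc_subset_Ioc_right hy1)
    refine Integrable.mono' hgi ?_
      (Filter.Eventually.of_forall fun t => by rw [Real.norm_eq_abs]; exact hFg t)
    have hvm : AEMeasurable v (volume.restrict (Ioc 0 y₀)) :=
      ((hvc.mono (fun x hx => ⟨hx.1.le, hx.2.trans hy1⟩)).aemeasurable measurableSet_Ioc)
    have hv'm2 : AEMeasurable v' (volume.restrict (Ioc 0 y₀)) :=
      (hv'm.aemeasurable).mono_measure (Measure.restrict_mono (Ioc_subset_Ioc_right hy1) le_rfl)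
    have m1 : Measurable fun x : ℝ => |x| ^ (p - 2) := measurable_abs.pow measurable_const
    exact ((((aemeasurable_const.mul (m1.comp_aemeasurable hvm)).mul hvm).mul
      hv'm2)).aestronglyMeasurable
  -- FTC
  have hd : ∀ t ∈ uIcc (0:ℝ) y₀, HasDerivAt (fun y => |v y| ^ p) (F' t) t := by
    intro t ht
    rw [uIcc_of_le hy0le] at ht
    have htI : t ∈ Icc (0:ℝ) 1 := ⟨ht.1, ht.2.trans hy1⟩
    have h := (abs_rpow_hasDerivAt hp1 (v t)).comp t (hderiv t htI)
    simpa [hF'def, Function.comp_def, mul_assoc] using h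
  have hFTC := intervalIntegral.integral_eq_sub_of_hasDerivAt hd hF'int
  have hM : M ^ p = ∫ t in (0:ℝ)..y₀, F' t := by
    rw [hFTC, hv0, abs_zero, Real.zero_rpow (by positivity), sub_zero]
  -- chain of inequalities
  have hIgy : IntervalIntegrable g volume 0 y₀ := by
    apply hIg.mono_set
    rw [uIcc_of_le hy0le, uIcc_of_le zero_le_one]
    exact Icc_subset_Icc_right hy1
  have step1 : (∫ t in (0:ℝ)..y₀, F' t) ≤ ∫ t in (0:ℝ)..y₀, g t :=
    intervalIntegral.integral_mono_on hy0le hF'int hIgy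
      (fun t _ => (le_abs_self _).trans (hFg t))
  have hgnn : ∀ t, 0 ≤ g t := by
    intro t
    apply add_nonneg
    · exact mul_nonneg (div_nonneg (mul_nonneg (by linarith) hε.le) (by norm_num)) (sq_nonneg _)
    · exact mul_nonneg (div_nonneg (by linarith) (by linarith)) (Real.rpow_nonneg (abs_nonneg _) _)
  have step2 : (∫ t in (0:ℝ)..y₀, g t) ≤ ∫ t in (0:ℝ)..1, g t :=
    intervalIntegral.integral_mono_interval le_rfl hy0le hy1
      (Filter.Eventually.of_forall hgnn) hIg
  have step3 : (∫ t in (0:ℝ)..1, g t) =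
      ((3 + r) * ε / 2) * (∫ y in (0:ℝ)..1, (v' y) ^ 2) +
        ((3 + r) / (8 * ε)) * (∫ y in (0:ℝ)..1, |v y| ^ (1 + r)) := by
    rw [hgdef]
    rw [intervalIntegral.integral_add (hv'int.const_mul _) (hIvr.const_mul _),
      intervalIntegral.integral_const_mul, intervalIntegral.integral_const_mul]
  calc (Real.sqrt (∫ y in (0:ℝ)..1, v y ^ 2)) ^ p ≤ M ^ p := hLHS
    _ = ∫ t in (0:ℝ)..y₀, F' t := hM
    _ ≤ ∫ t in (0:ℝ)..1, g t := step1.trans step2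
    _ = _ := step3
end

section
/- Let v : [0,1] → ℝ be a W^{1,2} function with v(0) = 0 and let r ∈ (0,1). Then ‖v‖_{L^2(0,1)}^{(3+r)/2} ≤ ((3+r)/2) · ‖v'‖_{L^2(0,1)} · ‖v‖_{L^{1+r}(0,1)}^{(1+r)/2}. -/
open Set MeasureTheory Filter

lemma psi_habs (α : ℝ) (u : ℝ) : ((u:ℝ) ^ 2) ^ (α/2) = |u| ^ α := by
  rw [← sq_abs, ← Real.rpow_natCast |u| 2, ← Real.rpow_mul (abs_nonneg u)]
  congr 1; ring

lemma psi_deriv {α : ℝ} (hα : 0 < α) (u : ℝ) :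
    HasDerivAt (fun u : ℝ => (u ^ 2) ^ (α/2) * u) ((α + 1) * (u ^ 2) ^ (α/2)) u := by
  rcases eq_or_ne u 0 with rfl | hu
  · rw [hasDerivAt_iff_tendsto_slope]
    have hc : Continuous (fun u : ℝ => (u ^ 2) ^ (α/2)) :=
      (continuous_pow 2).rpow_const (fun x => Or.inr (by positivity))
    have ht : Tendsto (fun u : ℝ => (u ^ 2) ^ (α/2)) (nhdsWithin 0 {(0:ℝ)}ᶜ)
        (nhds (((0:ℝ) ^ 2) ^ (α/2))) := (hc.tendsto 0).mono_left nhdsWithin_le_nhds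
    have h0 : (((0:ℝ)) ^ 2) ^ (α/2) = (α + 1) * ((0:ℝ) ^ 2) ^ (α/2) := by
      rw [zero_pow (by norm_num), Real.zero_rpow (by positivity)]; ring
    rw [h0] at ht
    refine ht.congr' ?_
    filter_upwards [self_mem_nhdsWithin] with x hx
    have hx' : x ≠ 0 := hx
    rw [slope_def_field]
    field_simp
    ring
  · have h2 : HasDerivAt (fun x : ℝ => x ^ 2) (2 * u) u := by
      simpa using hasDerivAt_pow 2 u
    have h4 : HasDerivAt (fun x : ℝ => (x ^ 2) ^ (α/2)) (2 * u * (α/2) * (u ^ 2) ^ (α/2 - 1)) u :=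
      h2.rpow_const (Or.inl (pow_ne_zero 2 hu))
    have h5 := h4.mul (hasDerivAt_id u)
    have hkey : (u ^ 2) ^ (α/2 - 1) * (u ^ 2) = (u ^ 2) ^ (α/2) := by
      rw [Real.rpow_sub_one (pow_ne_zero 2 hu)]
      field_simp
    convert (show HasDerivAt (fun u : ℝ => (u ^ 2) ^ (α/2) * u) (2 * u * (α/2) * (u ^ 2) ^ (α/2 - 1) * id u + (u ^ 2) ^ (α/2) * 1) u from h5) using 1
    simp only [id]
    nlinarith [hkey]

theorem interpolation_GN (v v' : ℝ → ℝ) (r : ℝ) (hr : r ∈ Set.Ioo (0 : ℝ) 1)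
    (hderiv : ∀ y ∈ Set.Icc (0 : ℝ) 1, HasDerivAt v (v' y) y)
    (hv'int : IntervalIntegrable (fun y => (v' y) ^ 2) volume 0 1)
    (hv0 : v 0 = 0) :
    (Real.sqrt (∫ y in (0:ℝ)..1, (v y) ^ 2)) ^ ((3 + r) / 2) ≤
      ((3 + r) / 2) * Real.sqrt (∫ y in (0:ℝ)..1, (v' y) ^ 2) *
        Real.sqrt (∫ y in (0:ℝ)..1, |v y| ^ (1 + r)) := by
  obtain ⟨hr0, hr1⟩ := hr
  set α : ℝ := (1 + r) / 2 with hα_def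
  have hα : 0 < α := by rw [hα_def]; linarith
  -- continuity of v on Icc
  have hvc : ContinuousOn v (Icc 0 1) := fun y hy => ((hderiv y hy).continuousAt).continuousWithinAt
  -- a.e. measurability of v' on Ioc 0 1
  have h_ae : v' =ᶠ[ae (volume.restrict (Ioc (0:ℝ) 1))] deriv v := by
    filter_upwards [ae_restrict_mem measurableSet_Ioc] with y hy
    exact ((hderiv y (Ioc_subset_Icc_self hy)).deriv).symm
  have h_sm : AEStronglyMeasurable v' (volume.restrict (Ioc (0:ℝ) 1)) :=
    (measurable_deriv v).aestronglyMeasurable.congr h_ae.symm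
  -- integrability of v'^2 on Ioc 0 1
  have hint2 : IntegrableOn (fun y => v' y ^ 2) (Ioc (0:ℝ) 1) volume := by
    have := intervalIntegrable_iff.1 hv'int
    rwa [uIoc_of_le (by norm_num : (0:ℝ) ≤ 1)] at this
  -- integrability of v' on Ioc 0 1
  have hv'int1 : IntegrableOn v' (Ioc (0:ℝ) 1) volume := by
    have hb : IntegrableOn (fun y => 1 + v' y ^ 2) (Ioc (0:ℝ) 1) volume :=
      (integrableOn_const measure_Ioc_lt_top.ne (by simp) : IntegrableOn (fun _ => (1:ℝ)) (Ioc (0:ℝ) 1) volume).add hint2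
    refine MeasureTheory.Integrable.mono hb h_sm (ae_of_all _ fun y => ?_)
    simp only [Real.norm_eq_abs]
    rw [abs_of_nonneg (by positivity : (0:ℝ) ≤ 1 + v' y ^ 2)]
    nlinarith [sq_abs (v' y), abs_nonneg (v' y), sq_nonneg (|v' y| - 1)]
  have hv'01 : IntervalIntegrable v' volume 0 1 := by
    rw [intervalIntegrable_iff, uIoc_of_le (by norm_num : (0:ℝ) ≤ 1)]; exact hv'int1
  -- Hölder / Cauchy-Schwarz step
  have holder : ∫ y in (0:ℝ)..1, |v y| ^ α * |v' y| ≤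
      Real.sqrt (∫ y in (0:ℝ)..1, (v' y) ^ 2) * Real.sqrt (∫ y in (0:ℝ)..1, |v y| ^ (1 + r)) := by
    have h01 : (0:ℝ) ≤ 1 := by norm_num
    have hpq : (2:ℝ).HolderConjugate 2 := Real.HolderConjugate.two_two
    set μ := volume.restrict (Ioc (0:ℝ) 1) with hμ
    have hf_sm : AEStronglyMeasurable (fun y => |v y| ^ α) μ :=
      (((hvc.mono Ioc_subset_Icc_self).abs).rpow_const
        (fun y hy => Or.inr hα.le)).aestronglyMeasurable measurableSet_Ioc
    have hf2cont : ContinuousOn (fun y => (|v y| ^ α) ^ 2) (Icc (0:ℝ) 1) :=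
      ((hvc.abs).rpow_const (fun y hy => Or.inr hα.le)).pow 2
    have hf2int : Integrable (fun y => (|v y| ^ α) ^ 2) μ :=
      (hf2cont.integrableOn_Icc).mono_set Ioc_subset_Icc_self
    have hfmem : MemLp (fun y => |v y| ^ α) 2 μ :=
      (memLp_two_iff_integrable_sq hf_sm).2 hf2int
    have hg_sm : AEStronglyMeasurable (fun y => ‖v' y‖) μ := h_sm.norm
    have hg2int : Integrable (fun y => ‖v' y‖ ^ 2) μ := by
      refine hint2.congr (ae_of_all _ fun y => ?_)
      simp [Real.norm_eq_abs, sq_abs]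
    have hgmem : MemLp (fun y => ‖v' y‖) 2 μ :=
      (memLp_two_iff_integrable_sq hg_sm).2 hg2int
    have h2e : ENNReal.ofReal (2:ℝ) = 2 := by norm_num
    have H := MeasureTheory.integral_mul_le_Lp_mul_Lq_of_nonneg hpq
      (ae_of_all μ fun y => by positivity) (ae_of_all μ fun y => norm_nonneg _)
      (h2e ▸ hfmem) (h2e ▸ hgmem)
    rw [intervalIntegral.integral_of_le h01, intervalIntegral.integral_of_le h01,
      intervalIntegral.integral_of_le h01]
    have e1 : ∫ y, (|v y| ^ α) ^ (2:ℝ) ∂μ = ∫ y in Ioc (0:ℝ) 1, |v y| ^ (1 + r) := by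
      refine setIntegral_congr_fun measurableSet_Ioc fun y hy => ?_
      rw [← Real.rpow_mul (abs_nonneg _)]
      congr 1
      rw [hα_def]; ring
    have e2 : ∫ y, ‖v' y‖ ^ (2:ℝ) ∂μ = ∫ y in Ioc (0:ℝ) 1, v' y ^ 2 := by
      refine setIntegral_congr_fun measurableSet_Ioc fun y hy => ?_
      rw [show (2:ℝ) = ((2:ℕ):ℝ) by norm_num, Real.rpow_natCast]
      simp [Real.norm_eq_abs, sq_abs]
    rw [e1, e2] at H
    calc ∫ y in Ioc (0:ℝ) 1, |v y| ^ α * |v' y|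
        = ∫ y, (|v y| ^ α) * ‖v' y‖ ∂μ := by
          simp [Real.norm_eq_abs, hμ]
      _ ≤ (∫ y in Ioc (0:ℝ) 1, |v y| ^ (1 + r)) ^ ((1:ℝ)/2) *
          (∫ y in Ioc (0:ℝ) 1, v' y ^ 2) ^ ((1:ℝ)/2) := H
      _ = Real.sqrt (∫ y in Ioc (0:ℝ) 1, v' y ^ 2) *
          Real.sqrt (∫ y in Ioc (0:ℝ) 1, |v y| ^ (1 + r)) := by
          rw [Real.sqrt_eq_rpow, Real.sqrt_eq_rpow]; ring
  -- integrability of the FTC integrand on [0,1]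
  have hcontg : ContinuousOn (fun y => (α + 1) * ((v y) ^ 2) ^ (α/2)) (uIcc (0:ℝ) 1) := by
    rw [uIcc_of_le (by norm_num : (0:ℝ) ≤ 1)]
    exact continuousOn_const.mul (((hvc.pow 2).rpow_const (fun y hy => Or.inr (by positivity))))
  have hGint : IntervalIntegrable (fun y => (α + 1) * ((v y) ^ 2) ^ (α/2) * v' y) volume 0 1 :=
    hv'01.continuousOn_mul hcontg
  -- pointwise bound
  have key : ∀ x ∈ Icc (0:ℝ) 1, |v x| ^ (α + 1) ≤
      (α + 1) * ∫ y in (0:ℝ)..1, |v y| ^ α * |v' y| := by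
    intro x hx
    have hux : uIcc (0:ℝ) x = Icc 0 x := uIcc_of_le hx.1
    have hsub : Icc (0:ℝ) x ⊆ Icc 0 1 := Icc_subset_Icc le_rfl hx.2
    have hd : ∀ y ∈ uIcc (0:ℝ) x, HasDerivAt (fun t => ((v t) ^ 2) ^ (α/2) * v t)
        ((α + 1) * ((v y) ^ 2) ^ (α/2) * v' y) y := by
      intro y hy
      have := HasDerivAt.comp y (psi_deriv hα (v y)) (hderiv y (hsub (hux ▸ hy)))
      simpa [Function.comp_def, mul_assoc] using this
    have hGx : IntervalIntegrable (fun y => (α + 1) * ((v y) ^ 2) ^ (α/2) * v' y) volume 0 x :=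
      hGint.mono_set (by
        rw [hux, uIcc_of_le (by norm_num : (0:ℝ) ≤ 1)]
        exact Icc_subset_Icc le_rfl hx.2)
    have ftc := intervalIntegral.integral_eq_sub_of_hasDerivAt hd hGx
    have hzero : ((v 0) ^ 2) ^ (α/2) * v 0 = 0 := by rw [hv0, mul_zero]
    rw [hzero, sub_zero] at ftc
    have habs1 : |v x| ^ (α + 1) = |((v x) ^ 2) ^ (α/2) * v x| := by
      rw [abs_mul, psi_habs, abs_of_nonneg (Real.rpow_nonneg (abs_nonneg _) _)]
      rcases eq_or_ne (v x) 0 with h | h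
      · simp [h, Real.zero_rpow (by positivity : α + 1 ≠ 0), Real.zero_rpow hα.ne']
      · rw [Real.rpow_add_one (abs_ne_zero.2 h)]
    have hstep1 : |((v x) ^ 2) ^ (α/2) * v x| ≤
        ∫ y in (0:ℝ)..x, |(α + 1) * ((v y) ^ 2) ^ (α/2) * v' y| := by
      rw [← ftc]
      exact intervalIntegral.abs_integral_le_integral_abs hx.1
    have hstep2 : (∫ y in (0:ℝ)..x, |(α + 1) * ((v y) ^ 2) ^ (α/2) * v' y|) ≤
        ∫ y in (0:ℝ)..1, |(α + 1) * ((v y) ^ 2) ^ (α/2) * v' y| :=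
      intervalIntegral.integral_mono_interval le_rfl hx.1 hx.2
        (ae_of_all _ fun y => abs_nonneg _) hGint.abs
    have hcongr : (∫ y in (0:ℝ)..1, |(α + 1) * ((v y) ^ 2) ^ (α/2) * v' y|) =
        (α + 1) * ∫ y in (0:ℝ)..1, |v y| ^ α * |v' y| := by
      rw [← intervalIntegral.integral_const_mul]
      refine intervalIntegral.integral_congr fun y hy => ?_
      rw [abs_mul, abs_mul, psi_habs,
        abs_of_nonneg (by positivity : (0:ℝ) ≤ α + 1),
        abs_of_nonneg (Real.rpow_nonneg (abs_nonneg _) _), mul_assoc]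
    calc |v x| ^ (α + 1) = |((v x) ^ 2) ^ (α/2) * v x| := habs1
      _ ≤ ∫ y in (0:ℝ)..x, |(α + 1) * ((v y) ^ 2) ^ (α/2) * v' y| := hstep1
      _ ≤ ∫ y in (0:ℝ)..1, |(α + 1) * ((v y) ^ 2) ^ (α/2) * v' y| := hstep2
      _ = (α + 1) * ∫ y in (0:ℝ)..1, |v y| ^ α * |v' y| := hcongr
  -- conclusion
  have h3r : (0:ℝ) < 3 + r := by linarith
  set R : ℝ := ((3 + r) / 2) * Real.sqrt (∫ y in (0:ℝ)..1, (v' y) ^ 2) *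
      Real.sqrt (∫ y in (0:ℝ)..1, |v y| ^ (1 + r)) with hR_def
  have hα1 : α + 1 = (3 + r) / 2 := by rw [hα_def]; ring
  have hRnn : 0 ≤ R := by
    rw [hR_def]
    positivity
  have hR : ∀ x ∈ Icc (0:ℝ) 1, |v x| ^ (α + 1) ≤ R := by
    intro x hx
    refine (key x hx).trans ?_
    calc (α + 1) * ∫ y in (0:ℝ)..1, |v y| ^ α * |v' y|
        ≤ (α + 1) * (Real.sqrt (∫ y in (0:ℝ)..1, (v' y) ^ 2) *
            Real.sqrt (∫ y in (0:ℝ)..1, |v y| ^ (1 + r))) :=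
          mul_le_mul_of_nonneg_left holder (by positivity)
      _ = R := by rw [hR_def, hα1]; ring
  have hpt : ∀ x ∈ Icc (0:ℝ) 1, v x ^ 2 ≤ R ^ ((4:ℝ)/(3 + r)) := by
    intro x hx
    have hexp : (α + 1) * ((4:ℝ)/(3 + r)) = 2 := by
      rw [hα1]; field_simp; ring
    have heq : v x ^ 2 = (|v x| ^ (α + 1)) ^ ((4:ℝ)/(3 + r)) := by
      calc v x ^ 2 = |v x| ^ (2:ℕ) := (sq_abs _).symm
        _ = |v x| ^ ((2:ℕ):ℝ) := (Real.rpow_natCast _ 2).symm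
        _ = |v x| ^ ((α + 1) * ((4:ℝ)/(3 + r))) := by rw [hexp]; norm_num
        _ = (|v x| ^ (α + 1)) ^ ((4:ℝ)/(3 + r)) := Real.rpow_mul (abs_nonneg _) _ _
    rw [heq]
    exact Real.rpow_le_rpow (Real.rpow_nonneg (abs_nonneg _) _) (hR x hx) (by positivity)
  have hv2int : IntervalIntegrable (fun y => v y ^ 2) volume 0 1 := by
    apply ContinuousOn.intervalIntegrable
    rw [uIcc_of_le (by norm_num : (0:ℝ) ≤ 1)]
    exact hvc.pow 2
  have hIb : (∫ y in (0:ℝ)..1, v y ^ 2) ≤ R ^ ((4:ℝ)/(3 + r)) := by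
    have := intervalIntegral.integral_mono_on (by norm_num : (0:ℝ) ≤ 1) hv2int
      intervalIntegrable_const hpt
    simpa using this
  have hsq : Real.sqrt (∫ y in (0:ℝ)..1, v y ^ 2) ≤ R ^ ((2:ℝ)/(3 + r)) := by
    have h2 : Real.sqrt (R ^ ((4:ℝ)/(3 + r))) = R ^ ((2:ℝ)/(3 + r)) := by
      rw [Real.sqrt_eq_rpow, ← Real.rpow_mul hRnn,
        show ((4:ℝ)/(3 + r)) * (1/2) = 2/(3 + r) by ring]
    exact (Real.sqrt_le_sqrt hIb).trans_eq h2
  calc (Real.sqrt (∫ y in (0:ℝ)..1, v y ^ 2)) ^ ((3 + r)/2)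
      ≤ (R ^ ((2:ℝ)/(3 + r))) ^ ((3 + r)/2) :=
        Real.rpow_le_rpow (Real.sqrt_nonneg _) hsq (by positivity)
    _ = R := by
        rw [← Real.rpow_mul hRnn, show ((2:ℝ)/(3 + r)) * ((3 + r)/2) = 1 by field_simp,
          Real.rpow_one]
end

section
/- Let k > 0, r ∈ (0,1). For any w ∈ H²(0,1) with w(0)=0, w'(1)=0, any f ∈ L²(0,1), and any ε with 0 < ε < 1/(2√k), the following holds: 2∫₀¹ w'' w dy + 2⟨−k|w|^{r−1}w + f, w⟩_{L²} ≤ −(16kε/(3+r))·‖w‖_{L²(0,1)}^{(3+r)/2} + 2‖f‖_{L²(0,1)}‖w‖_{L²(0,1)}. -/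
open Set MeasureTheory Filter

lemma aux_rpow_add_le {x y q : ℝ} (hx : 0 ≤ x) (hy : 0 ≤ y) (hq : 0 ≤ q) (hq1 : q ≤ 1) :
    (x + y) ^ q ≤ x ^ q + y ^ q := by
  have h := NNReal.rpow_add_le_add_rpow x.toNNReal y.toNNReal hq hq1
  have := NNReal.coe_le_coe.2 h
  push_cast [NNReal.coe_rpow, Real.coe_toNNReal x hx, Real.coe_toNNReal y hy] at this
  simpa [← Real.toNNReal_add hx hy, Real.coe_toNNReal _ (add_nonneg hx hy)] using this

lemma aux_cs_integral {a b : ℝ → ℝ}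
    (ha : IntervalIntegrable (fun y => a y ^ 2) volume 0 1)
    (hb : IntervalIntegrable (fun y => b y ^ 2) volume 0 1)
    (hab : IntervalIntegrable (fun y => a y * b y) volume 0 1) :
    (∫ y in (0:ℝ)..1, a y * b y) ≤
      Real.sqrt (∫ y in (0:ℝ)..1, a y ^ 2) * Real.sqrt (∫ y in (0:ℝ)..1, b y ^ 2) := by
  set A := ∫ y in (0:ℝ)..1, a y ^ 2 with hA
  set B := ∫ y in (0:ℝ)..1, b y ^ 2 with hB
  set P := ∫ y in (0:ℝ)..1, a y * b y with hP
  have hA0 : 0 ≤ A := intervalIntegral.integral_nonneg zero_le_one (fun x _ => sq_nonneg _)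
  have key : P ^ 2 ≤ A * B := by
    have quad : ∀ t : ℝ, 0 ≤ A * (t * t) + (2 * P) * t + B := by
      intro t
      have h0 : 0 ≤ ∫ y in (0:ℝ)..1, (t * a y + b y) ^ 2 :=
        intervalIntegral.integral_nonneg zero_le_one (fun x _ => sq_nonneg _)
      have he : (∫ y in (0:ℝ)..1, (t * a y + b y) ^ 2)
          = t ^ 2 * A + 2 * t * P + B := by
        have : (fun y => (t * a y + b y) ^ 2)
            = fun y => t ^ 2 * (a y ^ 2) + (2 * t * (a y * b y) + b y ^ 2) := by
          funext y; ring
        rw [this, intervalIntegral.integral_add (ha.const_mul _) ((hab.const_mul _).add hb),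
          intervalIntegral.integral_add (hab.const_mul _) hb,
          intervalIntegral.integral_const_mul, intervalIntegral.integral_const_mul]
        ring
      nlinarith [h0, he]
    have hd := discrim_le_zero quad
    rw [discrim] at hd
    nlinarith [hd]
  calc P ≤ |P| := le_abs_self _
    _ = Real.sqrt (P ^ 2) := (Real.sqrt_sq_eq_abs P).symm
    _ ≤ Real.sqrt (A * B) := Real.sqrt_le_sqrt key
    _ = Real.sqrt A * Real.sqrt B := Real.sqrt_mul hA0 _

lemma aux_contInt {g : ℝ → ℝ} (hg : ContinuousOn g (Set.Icc 0 1)) :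
    IntervalIntegrable g volume 0 1 := by
  apply ContinuousOn.intervalIntegrable
  rwa [Set.uIcc_of_le zero_le_one]

private lemma aux_interp (r : ℝ) (hr0 : 0 < r) (hr1 : r < 1) (w w' : ℝ → ℝ)
    (hw : ∀ y ∈ Set.Icc (0 : ℝ) 1, HasDerivAt w (w' y) y)
    (hw'c : ContinuousOn w' (Set.Icc 0 1))
    (hbc0 : w 0 = 0) (y₀ : ℝ) (hy₀ : y₀ ∈ Set.Icc (0:ℝ) 1) :
    |w y₀| ^ ((3+r)/2) ≤ ((3+r)/2) * (Real.sqrt (∫ y in (0:ℝ)..1, w' y ^ 2) *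
      Real.sqrt (∫ y in (0:ℝ)..1, |w y| ^ (1+r))) := by
  set p : ℝ := (3+r)/2 with hp
  have hp1 : 1 < p := by rw [hp]; linarith
  have hp0 : 0 < p := by linarith
  have hwc : ContinuousOn w (Set.Icc 0 1) :=
    fun y hy => ((hw y hy).continuousAt).continuousWithinAt
  set B : ℝ := ∫ y in (0:ℝ)..1, w' y ^ 2 with hBdef
  set C : ℝ := ∫ y in (0:ℝ)..1, |w y| ^ (1+r) with hCdef
  have hB0 : 0 ≤ B := intervalIntegral.integral_nonneg zero_le_one (fun x _ => sq_nonneg _)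
  have hC0 : 0 ≤ C := intervalIntegral.integral_nonneg zero_le_one
    (fun x _ => Real.rpow_nonneg (abs_nonneg _) _)
  have key : ∀ δ : ℝ, 0 < δ →
      (w y₀ ^ 2 + δ) ^ (p/2) ≤ δ ^ (p/2) + p * (Real.sqrt B * Real.sqrt (C + δ ^ (p-1))) := by
    intro δ hδ
    set X : ℝ → ℝ := fun y => w y ^ 2 + δ with hXdef
    have hX : ∀ y, 0 < X y := fun y => by positivity
    set D : ℝ → ℝ := fun y => 2 * w y * w' y * (p/2) * X y ^ (p/2 - 1) with hDdef
    have hderiv : ∀ y ∈ Set.Icc (0:ℝ) 1, HasDerivAt (fun t => X t ^ (p/2)) (D y) y := by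
      intro y hy
      have h1 : HasDerivAt X (2 * w y * w' y) y := by
        simpa [hXdef] using ((hw y hy).pow 2).add_const δ
      exact h1.rpow_const (Or.inl (ne_of_gt (hX y)))
    have hXc : ContinuousOn X (Set.Icc 0 1) := (hwc.pow 2).add continuousOn_const
    have hXrc : ∀ q : ℝ, ContinuousOn (fun y => X y ^ q) (Set.Icc 0 1) :=
      fun q => hXc.rpow_const (fun x _ => Or.inl (ne_of_gt (hX x)))
    have hDc : ContinuousOn D (Set.Icc 0 1) :=
      (((continuousOn_const.mul hwc).mul hw'c).mul continuousOn_const).mul (hXrc _)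
    set G : ℝ → ℝ := fun y => p * (X y ^ ((p-1)/2) * |w' y|) with hGdef
    have hGc : ContinuousOn G (Set.Icc 0 1) :=
      continuousOn_const.mul ((hXrc _).mul hw'c.abs)
    have hDleG : ∀ y, 0 < X y → w y ^ 2 ≤ X y → D y ≤ G y := by
      intro y hXy hw2
      have hwle : |w y| ≤ X y ^ ((1:ℝ)/2) := by
        rw [← Real.sqrt_eq_rpow, ← Real.sqrt_sq_eq_abs]
        exact Real.sqrt_le_sqrt hw2
      have hb1 : w y * w' y ≤ X y ^ ((1:ℝ)/2) * |w' y| := by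
        calc w y * w' y ≤ |w y * w' y| := le_abs_self _
          _ = |w y| * |w' y| := abs_mul _ _
          _ ≤ X y ^ ((1:ℝ)/2) * |w' y| :=
            mul_le_mul_of_nonneg_right hwle (abs_nonneg _)
      have h2 : X y ^ (p/2-1) * (w y * w' y) ≤ X y ^ (p/2-1) * (X y ^ ((1:ℝ)/2) * |w' y|) :=
        mul_le_mul_of_nonneg_left hb1 (Real.rpow_nonneg hXy.le _)
      calc D y = p * (X y ^ (p/2-1) * (w y * w' y)) := by rw [hDdef]; ring
        _ ≤ p * (X y ^ (p/2-1) * (X y ^ ((1:ℝ)/2) * |w' y|)) :=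
            mul_le_mul_of_nonneg_left h2 hp0.le
        _ = G y := by
            show _ = p * (X y ^ ((p-1)/2) * |w' y|)
            rw [show ((p-1)/2 : ℝ) = (p/2-1) + (1:ℝ)/2 by ring, Real.rpow_add hXy]
            ring
    have hy₀1 : (0:ℝ) ≤ y₀ := hy₀.1
    have hy₀2 : y₀ ≤ 1 := hy₀.2
    have hsub : Set.Icc (0:ℝ) y₀ ⊆ Set.Icc (0:ℝ) 1 := Set.Icc_subset_Icc le_rfl hy₀2
    have hsub' : Set.uIcc (0:ℝ) y₀ ⊆ Set.Icc (0:ℝ) 1 := by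
      rw [Set.uIcc_of_le hy₀1]; exact hsub
    have hftc : ∫ y in (0:ℝ)..y₀, D y = X y₀ ^ (p/2) - X 0 ^ (p/2) :=
      intervalIntegral.integral_eq_sub_of_hasDerivAt
        (fun t ht => hderiv t (hsub' ht))
        ((hDc.mono hsub').intervalIntegrable)
    have hX0 : X 0 ^ (p/2) = δ ^ (p/2) := by
      rw [hXdef]; simp [hbc0]
    have hDint : IntervalIntegrable D volume 0 y₀ := (hDc.mono hsub').intervalIntegrable
    have hGint1 : IntervalIntegrable G volume 0 1 := aux_contInt hGc


    have hGint : IntervalIntegrable G volume 0 y₀ := (hGc.mono hsub').intervalIntegrable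
    have step1 : ∫ y in (0:ℝ)..y₀, D y ≤ ∫ y in (0:ℝ)..y₀, G y :=
      intervalIntegral.integral_mono_on hy₀1 hDint hGint
        (fun x hx => hDleG x (hX x) (by simp [hXdef]; linarith))
    have step2 : ∫ y in (0:ℝ)..y₀, G y ≤ ∫ y in (0:ℝ)..1, G y :=
      intervalIntegral.integral_mono_interval le_rfl hy₀1 hy₀2
        (Filter.Eventually.of_forall (fun y => by
          have : 0 ≤ X y ^ ((p-1)/2) * |w' y| :=
            mul_nonneg (Real.rpow_nonneg (hX y).le _) (abs_nonneg _)
          rw [hGdef]; positivity))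
        hGint1
    have hCS : (∫ y in (0:ℝ)..1, X y ^ ((p-1)/2) * |w' y|) ≤
        Real.sqrt (∫ y in (0:ℝ)..1, (X y ^ ((p-1)/2)) ^ 2) *
        Real.sqrt (∫ y in (0:ℝ)..1, |w' y| ^ 2) := by
      exact aux_cs_integral (aux_contInt ((hXrc ((p-1)/2)).pow 2))
        (aux_contInt (hw'c.abs.pow 2)) (aux_contInt ((hXrc ((p-1)/2)).mul hw'c.abs))
    have hsq1 : (∫ y in (0:ℝ)..1, (X y ^ ((p-1)/2)) ^ 2) = ∫ y in (0:ℝ)..1, X y ^ (p-1) := by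
      apply intervalIntegral.integral_congr
      intro y _
      show (X y ^ ((p-1)/2)) ^ 2 = X y ^ (p-1)
      rw [sq, ← Real.rpow_add (hX y)]
      norm_num
    have hsq2 : (∫ y in (0:ℝ)..1, |w' y| ^ 2) = B := by
      rw [hBdef]
      apply intervalIntegral.integral_congr
      intro y _
      show |w' y| ^ 2 = w' y ^ 2
      exact sq_abs _
    have hXp : (∫ y in (0:ℝ)..1, X y ^ (p-1)) ≤ C + δ ^ (p-1) := by
      have hpt : ∀ y ∈ Set.Icc (0:ℝ) 1, X y ^ (p-1) ≤ |w y| ^ (1+r) + δ ^ (p-1) := by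
        intro y _
        have h1 : X y ^ (p-1) ≤ (w y ^ 2) ^ (p-1) + δ ^ (p-1) :=
          aux_rpow_add_le (sq_nonneg _) hδ.le (by linarith) (by rw [hp]; linarith)
        have h2 : (w y ^ 2) ^ (p-1) = |w y| ^ (1+r) := by
          rw [show w y ^ 2 = |w y| ^ (2:ℕ) from (sq_abs _).symm,
            ← Real.rpow_natCast |w y| 2, ← Real.rpow_mul (abs_nonneg _)]
          congr 1
          rw [hp]; push_cast; ring
        rw [h2] at h1
        exact h1
      have hint1 : IntervalIntegrable (fun y => X y ^ (p-1)) volume 0 1 :=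
        aux_contInt (hXrc (p-1))
      have hint2 : IntervalIntegrable (fun y => |w y| ^ (1+r) + δ ^ (p-1)) volume 0 1 :=
        aux_contInt ((hwc.abs.rpow_const (fun x _ => Or.inr (by linarith))).add
          continuousOn_const)
      calc (∫ y in (0:ℝ)..1, X y ^ (p-1)) ≤ ∫ y in (0:ℝ)..1, (|w y| ^ (1+r) + δ ^ (p-1)) :=
            intervalIntegral.integral_mono_on zero_le_one hint1 hint2 hpt
        _ = C + δ ^ (p-1) := by
            rw [intervalIntegral.integral_add _ intervalIntegrable_const]
            · simp [hCdef]
            · exact aux_contInt (hwc.abs.rpow_const (fun x _ => Or.inr (by linarith)))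
      done
    have hGtot : (∫ y in (0:ℝ)..1, G y) ≤ p * (Real.sqrt B * Real.sqrt (C + δ ^ (p-1))) := by
      rw [hGdef, intervalIntegral.integral_const_mul]
      apply mul_le_mul_of_nonneg_left _ hp0.le
      calc (∫ y in (0:ℝ)..1, X y ^ ((p-1)/2) * |w' y|)
          ≤ Real.sqrt (∫ y in (0:ℝ)..1, (X y ^ ((p-1)/2)) ^ 2) *
            Real.sqrt (∫ y in (0:ℝ)..1, |w' y| ^ 2) := hCS
        _ = Real.sqrt (∫ y in (0:ℝ)..1, X y ^ (p-1)) * Real.sqrt B := by rw [hsq1, hsq2]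
        _ ≤ Real.sqrt (C + δ ^ (p-1)) * Real.sqrt B :=
            mul_le_mul_of_nonneg_right (Real.sqrt_le_sqrt hXp) (Real.sqrt_nonneg _)
        _ = Real.sqrt B * Real.sqrt (C + δ ^ (p-1)) := mul_comm _ _
    have : X y₀ ^ (p/2) = δ ^ (p/2) + ∫ y in (0:ℝ)..y₀, D y := by
      rw [hftc, hX0]; ring
    rw [show X y₀ = w y₀ ^ 2 + δ from rfl] at this
    calc (w y₀ ^ 2 + δ) ^ (p/2) = δ ^ (p/2) + ∫ y in (0:ℝ)..y₀, D y := this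
      _ ≤ δ ^ (p/2) + ∫ y in (0:ℝ)..1, G y := by linarith [step1.trans step2]
      _ ≤ δ ^ (p/2) + p * (Real.sqrt B * Real.sqrt (C + δ ^ (p-1))) := by linarith [hGtot]
  -- now take the limit δ → 0⁺
  have hM : |w y₀| ^ p = (w y₀ ^ 2) ^ (p/2) := by
    rw [show w y₀ ^ 2 = |w y₀| ^ (2:ℕ) from (sq_abs _).symm,
      ← Real.rpow_natCast |w y₀| 2, ← Real.rpow_mul (abs_nonneg _)]
    congr 1
    push_cast; ring
  have hlim : Tendsto (fun δ : ℝ => δ ^ (p/2) + p * (Real.sqrt B * Real.sqrt (C + δ ^ (p-1))))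
      (nhdsWithin 0 (Set.Ioi 0)) (nhds (0 + p * (Real.sqrt B * Real.sqrt (C + 0)))) := by
    have t1 : Tendsto (fun δ : ℝ => δ ^ (p/2)) (nhds 0) (nhds 0) := by
      have := (Real.continuousAt_rpow_const 0 (p/2) (Or.inr (by linarith))).tendsto
      rwa [Real.zero_rpow (by linarith : (0:ℝ) < p/2).ne'] at this
    have t2 : Tendsto (fun δ : ℝ => δ ^ (p-1)) (nhds 0) (nhds 0) := by
      have := (Real.continuousAt_rpow_const 0 (p-1) (Or.inr (by linarith))).tendsto
      rwa [Real.zero_rpow (by linarith : (0:ℝ) < p-1).ne'] at this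
    have t3 : Tendsto (fun δ : ℝ => Real.sqrt (C + δ ^ (p-1))) (nhds 0)
        (nhds (Real.sqrt (C + 0))) := (tendsto_const_nhds.add t2).sqrt
    exact (t1.add ((t3.const_mul (Real.sqrt B)).const_mul p)).mono_left nhdsWithin_le_nhds
  have hfin : |w y₀| ^ p ≤ 0 + p * (Real.sqrt B * Real.sqrt (C + 0)) := by
    apply ge_of_tendsto hlim
    filter_upwards [self_mem_nhdsWithin] with δ hδ
    have h1 : |w y₀| ^ p ≤ (w y₀ ^ 2 + δ) ^ (p/2) := by
      rw [hM]
      exact Real.rpow_le_rpow (sq_nonneg _) (by linarith [Set.mem_Ioi.mp hδ]) (by linarith)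
    exact h1.trans (key δ (Set.mem_Ioi.mp hδ))
  simpa using hfin

lemma aux_num (k r ε B C S F P T : ℝ) (hk : 0 < k) (hr0 : 0 < r) (hr1 : r < 1)
    (hε : 0 < ε) (hε' : ε < 1 / (2 * Real.sqrt k))
    (hB0 : 0 ≤ B) (hC0 : 0 ≤ C) (hS0 : 0 ≤ S)
    (hT : T ≤ (3+r)/2 * (Real.sqrt B * Real.sqrt C)) (hP : P ≤ F * S) :
    2 * (-B) + 2 * (P - k * C) ≤ -(16 * k * ε / (3 + r)) * T + 2 * F * S := by
  have hsB : Real.sqrt B ^ 2 = B := Real.sq_sqrt hB0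
  have hsC : Real.sqrt C ^ 2 = C := Real.sq_sqrt hC0
  have h4k : 4 * k * ε^2 < 1 := by
    have hsk : 0 < Real.sqrt k := Real.sqrt_pos.mpr hk
    have h1 : ε * (2 * Real.sqrt k) < 1 := (lt_div_iff₀ (by positivity)).mp hε'
    nlinarith [h1, mul_pos hε (mul_pos two_pos hsk), Real.mul_self_sqrt hk.le]
  have hyoung : 8 * k * ε * (Real.sqrt B * Real.sqrt C) ≤ 2 * B + 2 * (k * C) := by
    nlinarith [sq_nonneg (2 * ε * Real.sqrt B - Real.sqrt C), hsB, hsC, hk, hε, h4k, hB0,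
      mul_nonneg (Real.sqrt_nonneg B) (Real.sqrt_nonneg C)]
  have hc0 : 0 ≤ 16 * k * ε / (3 + r) := by positivity
  have h1 : 16 * k * ε / (3 + r) * T ≤
      16 * k * ε / (3 + r) * ((3+r)/2 * (Real.sqrt B * Real.sqrt C)) :=
    mul_le_mul_of_nonneg_left hT hc0
  have h2 : 16 * k * ε / (3 + r) * ((3+r)/2 * (Real.sqrt B * Real.sqrt C))
      = 8 * k * ε * (Real.sqrt B * Real.sqrt C) := by
    rw [show 16 * k * ε / (3 + r) * ((3+r)/2 * (Real.sqrt B * Real.sqrt C))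
      = (16 * k * ε) * ((3+r) / (3+r)) / 2 * (Real.sqrt B * Real.sqrt C) by ring,
      div_self (by linarith : (3:ℝ)+r ≠ 0)]
    ring
  linarith [h1, h2 ▸ h1, hyoung, hP]

theorem structural_condition_parabolic (k r ε : ℝ) (hk : 0 < k)
    (hr : r ∈ Set.Ioo (0 : ℝ) 1) (hε : 0 < ε) (hε' : ε < 1 / (2 * Real.sqrt k))
    (w w' w'' f : ℝ → ℝ)
    (hw : ∀ y ∈ Set.Icc (0 : ℝ) 1, HasDerivAt w (w' y) y)
    (hw' : ∀ y ∈ Set.Icc (0 : ℝ) 1, HasDerivAt w' (w'' y) y)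
    (hw''int : IntervalIntegrable w'' volume 0 1)
    (hbc0 : w 0 = 0) (hbc1 : w' 1 = 0)
    (hfm : Measurable f)
    (hf2 : IntervalIntegrable (fun y => (f y) ^ 2) volume 0 1) :
    2 * (∫ y in (0:ℝ)..1, w'' y * w y) +
        2 * (∫ y in (0:ℝ)..1, (-k * |w y| ^ (r - 1) * w y + f y) * w y) ≤
      -(16 * k * ε / (3 + r)) *
          (Real.sqrt (∫ y in (0:ℝ)..1, (w y) ^ 2)) ^ ((3 + r) / 2) +
        2 * Real.sqrt (∫ y in (0:ℝ)..1, (f y) ^ 2) *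
          Real.sqrt (∫ y in (0:ℝ)..1, (w y) ^ 2) := by
  obtain ⟨hr0, hr1⟩ := hr
  have hwc : ContinuousOn w (Set.Icc 0 1) :=
    fun y hy => ((hw y hy).continuousAt).continuousWithinAt
  have hw'c : ContinuousOn w' (Set.Icc 0 1) :=
    fun y hy => ((hw' y hy).continuousAt).continuousWithinAt
  set p : ℝ := (3+r)/2 with hp
  set B : ℝ := ∫ y in (0:ℝ)..1, w' y ^ 2 with hBdef
  set C : ℝ := ∫ y in (0:ℝ)..1, |w y| ^ (1+r) with hCdef
  set S : ℝ := Real.sqrt (∫ y in (0:ℝ)..1, (w y) ^ 2) with hSdef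
  set F : ℝ := Real.sqrt (∫ y in (0:ℝ)..1, (f y) ^ 2) with hFdef
  have hB0 : 0 ≤ B := intervalIntegral.integral_nonneg zero_le_one (fun x _ => sq_nonneg _)
  have hC0 : 0 ≤ C := intervalIntegral.integral_nonneg zero_le_one
    (fun x _ => Real.rpow_nonneg (abs_nonneg _) _)
  have hS0 : 0 ≤ S := Real.sqrt_nonneg _
  have hF0 : 0 ≤ F := Real.sqrt_nonneg _
  -- integration by parts
  have hw'int : IntervalIntegrable w' volume 0 1 := aux_contInt hw'c
  have hibp : ∫ y in (0:ℝ)..1, w' y * w' y =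
      w' 1 * w 1 - w' 0 * w 0 - ∫ y in (0:ℝ)..1, w'' y * w y := by
    apply intervalIntegral.integral_mul_deriv_eq_deriv_mul
      (fun x hx => hw' x (by rwa [Set.uIcc_of_le zero_le_one] at hx))
      (fun x hx => hw x (by rwa [Set.uIcc_of_le zero_le_one] at hx))
      hw''int hw'int
  have hI1 : (∫ y in (0:ℝ)..1, w'' y * w y) = -B := by
    have hB' : (∫ y in (0:ℝ)..1, w' y * w' y) = B := by
      rw [hBdef]
      exact intervalIntegral.integral_congr (fun y _ => (sq (w' y)).symm ▸ rfl)
    rw [hbc0, hbc1] at hibp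
    simp at hibp
    linarith [hibp, hB']
  -- rewriting the second integrand
  have hpt : ∀ y, (-k * |w y| ^ (r - 1) * w y + f y) * w y
      = f y * w y - k * |w y| ^ (1+r) := by
    intro y
    rcases eq_or_ne (w y) 0 with h | h
    · simp [h, Real.zero_rpow (by linarith : (1:ℝ)+r ≠ 0)]
    · have habs : 0 < |w y| := abs_pos.mpr h
      have key : |w y| ^ (r-1) * (w y * w y) = |w y| ^ (1+r) := by
        rw [show w y * w y = |w y| ^ (2:ℕ) from by rw [sq_abs]; ring,
          ← Real.rpow_natCast |w y| 2, ← Real.rpow_add habs]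
        congr 1
        push_cast; ring
      calc (-k * |w y| ^ (r - 1) * w y + f y) * w y
          = -k * (|w y| ^ (r-1) * (w y * w y)) + f y * w y := by ring
        _ = f y * w y - k * |w y| ^ (1+r) := by rw [key]; ring
  have hCcont : ContinuousOn (fun y => |w y| ^ (1+r)) (Set.Icc 0 1) :=
    hwc.abs.rpow_const (fun x _ => Or.inr (by linarith))
  have hCint : IntervalIntegrable (fun y => |w y| ^ (1+r)) volume 0 1 := aux_contInt hCcont
  have hfw : IntervalIntegrable (fun y => f y * w y) volume 0 1 := by
    rw [intervalIntegrable_iff_integrableOn_Ioc_of_le zero_le_one]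
    have hw2 : IntegrableOn (fun y => w y ^ 2) (Set.Ioc 0 1) volume := by
      have := aux_contInt (hwc.pow 2)
      rwa [intervalIntegrable_iff_integrableOn_Ioc_of_le zero_le_one] at this
    have hf2' : IntegrableOn (fun y => f y ^ 2) (Set.Ioc 0 1) volume := by
      rwa [intervalIntegrable_iff_integrableOn_Ioc_of_le zero_le_one] at hf2
    apply Integrable.mono' (((hf2'.add hw2).div_const 2))
    · exact (hfm.aemeasurable.aestronglyMeasurable.mul
        ((hwc.mono Set.Ioc_subset_Icc_self).aestronglyMeasurable measurableSet_Ioc))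
    · filter_upwards with y
      simp only [Pi.add_apply]
      rw [Real.norm_eq_abs, abs_mul]
      nlinarith [sq_nonneg (|f y| - |w y|), sq_abs (f y), sq_abs (w y), abs_nonneg (f y),
        abs_nonneg (w y)]
  have hI2 : (∫ y in (0:ℝ)..1, (-k * |w y| ^ (r - 1) * w y + f y) * w y)
      = (∫ y in (0:ℝ)..1, f y * w y) - k * C := by
    rw [intervalIntegral.integral_congr (g := fun y => f y * w y - k * |w y| ^ (1+r))
      (fun y _ => hpt y)]
    rw [intervalIntegral.integral_sub hfw (hCint.const_mul k),
      intervalIntegral.integral_const_mul]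
  -- Cauchy–Schwarz for ∫ f w
  have hP : (∫ y in (0:ℝ)..1, f y * w y) ≤ F * S := by
    rw [hFdef, hSdef]
    exact aux_cs_integral hf2 (aux_contInt (hwc.pow 2)) hfw
  -- sup bound
  obtain ⟨y₀, hy₀, hmax⟩ := isCompact_Icc.exists_isMaxOn (Set.nonempty_Icc.mpr zero_le_one)
    (continuous_abs.comp_continuousOn hwc)
  set M : ℝ := |w y₀| with hMdef
  have hM0 : 0 ≤ M := abs_nonneg _
  have hSM : S ≤ M := by
    rw [hSdef, show M = Real.sqrt (M^2) from (Real.sqrt_sq hM0).symm]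
    apply Real.sqrt_le_sqrt
    calc (∫ y in (0:ℝ)..1, (w y) ^ 2) ≤ ∫ y in (0:ℝ)..1, (M:ℝ)^2 := by
          apply intervalIntegral.integral_mono_on zero_le_one (aux_contInt (hwc.pow 2))
            intervalIntegrable_const
          intro x hx
          have h2 : |w x| ≤ |w y₀| := hmax hx
          show w x ^ 2 ≤ |w y₀| ^ 2
          nlinarith [h2, abs_nonneg (w x), sq_abs (w x)]
      _ = M^2 := by simp
  -- interpolation
  have hinterp : M ^ p ≤ p * (Real.sqrt B * Real.sqrt C) :=
    aux_interp r hr0 hr1 w w' hw hw'c hbc0 y₀ hy₀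
  have hSp : S ^ p ≤ M ^ p := Real.rpow_le_rpow hS0 hSM (by rw [hp]; linarith)
  rw [hI1, hI2]
  have hfin := aux_num k r ε B C S F (∫ y in (0:ℝ)..1, f y * w y) (S ^ p) hk hr0 hr1 hε hε'
    hB0 hC0 hS0 (hSp.trans hinterp) hP
  calc 2 * -B + 2 * ((∫ y in (0:ℝ)..1, f y * w y) - k * C)
      ≤ -(16 * k * ε / (3 + r)) * S ^ p + 2 * F * S := hfin
    _ = -(16 * k * ε / (3 + r)) * S ^ ((3+r)/2) + 2 * F * S := by rw [hp]
end
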